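/- For every vertex v of the Cayley graph C_{F_q^d}(E) and every good k-energy tuple (a_1,...,a_k,b_1,...,b_k) of elements of E, the sequence v, v+a_1, v+a_1+a_2, ..., v+a_1+...+a_k, v+Σa_i−b_1, ..., v+Σa_i−Σ_{i=1}^{k-1}b_i is a cycle of length 2k in C_{F_q^d}(E) with pairwise distinct vertices. Consequently, the number of 2k-cycles with distinct vertices through v is at least the number of good k-energy tuples in E. -/

import Mathlib

open Finset

section Aux

variable {V : Type*} [AddCommGroup V]

private def pS {k : ℕ} (f : Fin k → V) (j : ℕ) : V :=
  ∑ i ∈ Finset.univ.filter (fun i : Fin k => (i : ℕ) < j), f i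

private lemma pS_zero {k : ℕ} (f : Fin k → V) : pS f 0 = 0 := by
  simp [pS]

private lemma pS_top {k j : ℕ} (f : Fin k → V) (h : k ≤ j) : pS f j = ∑ i, f i := by
  unfold pS
  congr 1
  ext x
  simp only [mem_filter, mem_univ, true_and, iff_true]
  exact lt_of_lt_of_le x.isLt h

private lemma pS_succ {k j : ℕ} (f : Fin k → V) (h : j < k) :
    pS f (j + 1) = pS f j + f ⟨j, h⟩ := by
  unfold pS
  have hset : Finset.univ.filter (fun i : Fin k => (i : ℕ) < j + 1)
      = insert ⟨j, h⟩ (Finset.univ.filter (fun i : Fin k => (i : ℕ) < j)) := by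
    ext x
    simp only [mem_filter, mem_univ, true_and, mem_insert, Fin.ext_iff]
    omega
  rw [hset, Finset.sum_insert (by simp)]
  exact add_comm _ _

private lemma pS_split {k i j : ℕ} (f : Fin k → V) (h : i ≤ j) :
    pS f j = pS f i +
      ∑ x ∈ Finset.univ.filter (fun x : Fin k => i ≤ (x : ℕ) ∧ (x : ℕ) < j), f x := by
  unfold pS
  rw [← Finset.sum_filter_add_sum_filter_not
    (Finset.univ.filter fun x : Fin k => (x : ℕ) < j) (fun x => (x : ℕ) < i) f]
  congr 1
  · congr 1; ext x; simp only [mem_filter, mem_univ, true_and]; omega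
  · congr 1; ext x; simp only [mem_filter, mem_univ, true_and]; omega

private lemma pS_compl {k i : ℕ} (f : Fin k → V) :
    (∑ x, f x) - pS f i = ∑ x ∈ Finset.univ.filter (fun x : Fin k => i ≤ (x : ℕ)), f x := by
  rw [sub_eq_iff_eq_add']
  unfold pS
  rw [← Finset.sum_filter_add_sum_filter_not Finset.univ (fun x : Fin k => (x : ℕ) < i) f]
  congr 1
  congr 1; ext x; simp only [mem_filter, mem_univ, true_and]; omega

private def wfun {k : ℕ} (v : V) (a b : Fin k → V) (j : ℕ) : V :=
  if j ≤ k then v + pS a j else v + (∑ i, a i) - pS b (j - k)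

private lemma wfun_ge {k : ℕ} (v : V) (a b : Fin k → V) {j : ℕ} (h : k ≤ j) :
    wfun v a b j = v + (∑ i, a i) - pS b (j - k) := by
  unfold wfun
  by_cases hj : j ≤ k
  · have hjk : j = k := le_antisymm hj h
    subst hjk
    rw [if_pos le_rfl, pS_top a le_rfl, Nat.sub_self, pS_zero, sub_zero]
  · rw [if_neg hj]

private lemma wfun_zero {k : ℕ} (v : V) (a b : Fin k → V) : wfun v a b 0 = v := by
  unfold wfun
  rw [if_pos (Nat.zero_le _), pS_zero, add_zero]

private lemma wfun_top {k : ℕ} (v : V) (a b : Fin k → V) (hsum : ∑ i, a i = ∑ i, b i) :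
    wfun v a b (2 * k) = v := by
  rw [wfun_ge v a b (by omega : k ≤ 2 * k)]
  have h2 : 2 * k - k = k := by omega
  rw [h2, pS_top b le_rfl, hsum]
  abel

private lemma wfun_diff_a {k : ℕ} (v : V) (a b : Fin k → V) {j : ℕ} (h : j < k) :
    wfun v a b (j + 1) - wfun v a b j = a ⟨j, h⟩ := by
  unfold wfun
  rw [if_pos (by omega : j + 1 ≤ k), if_pos (by omega : j ≤ k), pS_succ a h]
  abel

private lemma wfun_diff_b {k : ℕ} (v : V) (a b : Fin k → V) {j : ℕ} (h1 : k ≤ j)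
    (h2 : j < 2 * k) :
    wfun v a b (j + 1) - wfun v a b j = - b ⟨j - k, by omega⟩ := by
  rw [wfun_ge v a b h1, wfun_ge v a b (by omega : k ≤ j + 1)]
  have h3 : j + 1 - k = (j - k) + 1 := by omega
  rw [h3, pS_succ b (by omega : j - k < k)]
  abel

private lemma wfun_diff_a' {k : ℕ} (v : V) (a b : Fin k → V) (i : Fin k) :
    wfun v a b ((i : ℕ) + 1) - wfun v a b (i : ℕ) = a i := by
  have h := wfun_diff_a v a b i.isLt
  simpa using h

private lemma wfun_diff_b' {k : ℕ} (v : V) (a b : Fin k → V) (i : Fin k) :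
    wfun v a b (k + (i : ℕ)) - wfun v a b (k + (i : ℕ) + 1) = b i := by
  have h := wfun_diff_b v a b (show k ≤ k + (i : ℕ) by omega)
    (show k + (i : ℕ) < 2 * k by have := i.isLt; omega)
  have he : (⟨k + (i : ℕ) - k, by have := i.isLt; omega⟩ : Fin k) = i :=
    Fin.ext (by show k + (i : ℕ) - k = (i : ℕ); omega)
  rw [he] at h
  rw [← neg_sub, h, neg_neg]

private lemma wfun_ne {k : ℕ} (hk : 2 ≤ k) (v : V) (a b : Fin k → V)
    (hgood : ∀ I J : Finset (Fin k), ¬(I = ∅ ∧ J = ∅) →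
      ¬(I = Finset.univ ∧ J = Finset.univ) →
      ∑ i ∈ I, a i ≠ ∑ j ∈ J, b j)
    {i j : ℕ} (hij : i < j) (hj : j < 2 * k) :
    wfun v a b i ≠ wfun v a b j := by
  haveI : Nonempty (Fin k) := ⟨⟨0, by omega⟩⟩
  intro h
  by_cases hjk : j ≤ k
  · -- both in the `a` part
    unfold wfun at h
    rw [if_pos (by omega : i ≤ k), if_pos hjk] at h
    have h2 : pS a i = pS a j := add_left_cancel h
    rw [pS_split a (le_of_lt hij)] at h2
    have h3 : ∑ x ∈ Finset.univ.filter (fun x : Fin k => i ≤ (x : ℕ) ∧ (x : ℕ) < j), a x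
        = ∑ x ∈ (∅ : Finset (Fin k)), b x := by
      rw [Finset.sum_empty]
      nth_rewrite 1 [← add_zero (pS a i)] at h2
      exact (add_left_cancel h2).symm
    have hImem : (⟨i, by omega⟩ : Fin k) ∈ Finset.univ.filter
        (fun x : Fin k => i ≤ (x : ℕ) ∧ (x : ℕ) < j) := by
      simp only [mem_filter, mem_univ, true_and]; omega
    exact hgood _ ∅ (fun hc => Finset.ne_empty_of_mem hImem hc.1)
      (fun hc => absurd hc.2.symm Finset.univ_nonempty.ne_empty) h3
  · by_cases hik : i ≤ k
    · -- mixed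
      unfold wfun at h
      rw [if_pos hik, if_neg hjk, add_sub_assoc] at h
      have h2 : pS a i = (∑ x, a x) - pS b (j - k) := add_left_cancel h
      have h3 : (∑ x, a x) - pS a i = pS b (j - k) := by
        rw [h2]; abel
      rw [pS_compl a] at h3
      have hJmem : (⟨0, by omega⟩ : Fin k) ∈
          Finset.univ.filter (fun x : Fin k => (x : ℕ) < j - k) := by
        simp only [mem_filter, mem_univ, true_and]; omega
      have hJne : (⟨k - 1, by omega⟩ : Fin k) ∉
          Finset.univ.filter (fun x : Fin k => (x : ℕ) < j - k) := by
        simp only [mem_filter, mem_univ, true_and]; omega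
      exact hgood _ _ (fun hc => Finset.ne_empty_of_mem hJmem hc.2)
        (fun hc => hJne (by rw [hc.2]; exact Finset.mem_univ _)) h3
    · -- both in the `b` part
      unfold wfun at h
      rw [if_neg hik, if_neg hjk, add_sub_assoc, add_sub_assoc] at h
      have h2 : pS b (i - k) = pS b (j - k) := by
        have h2' := add_left_cancel h
        exact sub_right_injective h2'
      rw [pS_split b (show i - k ≤ j - k by omega)] at h2
      have h3 : (0 : V) = ∑ x ∈ Finset.univ.filter
          (fun x : Fin k => i - k ≤ (x : ℕ) ∧ (x : ℕ) < j - k), b x := by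
        have := h2
        nth_rewrite 1 [← add_zero (pS b (i - k))] at this
        exact add_left_cancel this
      have hJmem : (⟨i - k, by omega⟩ : Fin k) ∈ Finset.univ.filter
          (fun x : Fin k => i - k ≤ (x : ℕ) ∧ (x : ℕ) < j - k) := by
        simp only [mem_filter, mem_univ, true_and]; omega
      refine hgood ∅ _ (fun hc => Finset.ne_empty_of_mem hJmem hc.2)
        (fun hc => ?_) (by rw [Finset.sum_empty]; exact h3)
      exact absurd hc.1.symm (Finset.univ_nonempty.ne_empty)

end Aux

/-- Every good `k`-energy tuple `(a_1,...,a_k,b_1,...,b_k)` of elements of a symmetric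
set `E` (with `0 ∉ E`) gives, for each vertex `v`, the cycle
`v, v+a_1, ..., v+a_1+⋯+a_k, v+∑a_i−b_1, ..., v+∑a_i−∑_{i≤k-1}b_i` of length `2k` in the
Cayley graph of `E`, with pairwise distinct vertices; consequently, the number of
`2k`-cycles with distinct vertices through `v` is at least the number of good
`k`-energy tuples in `E`. -/
theorem stmt_4 {F : Type*} [Field F] [Fintype F] [DecidableEq F] (d k : ℕ) (hk : 2 ≤ k)
    (E : Finset (Fin d → F)) (hsym : ∀ x ∈ E, -x ∈ E) (h0 : (0 : Fin d → F) ∉ E)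
    (v : Fin d → F) (a b : Fin k → (Fin d → F))
    (ha : ∀ i, a i ∈ E) (hb : ∀ i, b i ∈ E)
    (hsum : ∑ i, a i = ∑ i, b i)
    (hgood : ∀ I J : Finset (Fin k), ¬(I = ∅ ∧ J = ∅) →
      ¬(I = Finset.univ ∧ J = Finset.univ) →
      ∑ i ∈ I, a i ≠ ∑ j ∈ J, b j)
    (w : ℕ → (Fin d → F))
    (hw : ∀ j : ℕ, w j =
      if j ≤ k then v + ∑ i ∈ Finset.univ.filter (fun i : Fin k => (i : ℕ) < j), a i
      else v + (∑ i, a i) - ∑ i ∈ Finset.univ.filter (fun i : Fin k => (i : ℕ) < j - k), b i) :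
    (w 0 = v ∧ w (2 * k) = v ∧
      (∀ j < 2 * k, w (j + 1) - w j ∈ E ∧ w j ≠ w (j + 1)) ∧
      (∀ i < 2 * k, ∀ j < 2 * k, i ≠ j → w i ≠ w j)) ∧
    Set.ncard {p : (Fin k → (Fin d → F)) × (Fin k → (Fin d → F)) |
        (∀ i, p.1 i ∈ E) ∧ (∀ i, p.2 i ∈ E) ∧ (∑ i, p.1 i = ∑ i, p.2 i) ∧
        ∀ I J : Finset (Fin k), ¬(I = ∅ ∧ J = ∅) →
          ¬(I = Finset.univ ∧ J = Finset.univ) →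
          ∑ i ∈ I, p.1 i ≠ ∑ j ∈ J, p.2 j} ≤
      Set.ncard {c : ℕ → (Fin d → F) |
        c 0 = v ∧ c (2 * k) = v ∧ (∀ j, 2 * k ≤ j → c j = v) ∧
        (∀ j < 2 * k, c (j + 1) - c j ∈ E) ∧
        (∀ i < 2 * k, ∀ j < 2 * k, i ≠ j → c i ≠ c j)} := by
  have hw' : ∀ j, w j = wfun v a b j := by
    intro j
    rw [hw j]
    rfl
  -- generic edge fact for `wfun` with any good tuple
  have hedge : ∀ (a' b' : Fin k → (Fin d → F)), (∀ i, a' i ∈ E) → (∀ i, b' i ∈ E) →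
      ∀ j < 2 * k, wfun v a' b' (j + 1) - wfun v a' b' j ∈ E := by
    intro a' b' ha' hb' j hj
    by_cases hjk : j < k
    · rw [wfun_diff_a v a' b' hjk]
      exact ha' _
    · rw [wfun_diff_b v a' b' (by omega) hj]
      exact hsym _ (hb' _)
  constructor
  · refine ⟨?_, ?_, ?_, ?_⟩
    · rw [hw' 0, wfun_zero]
    · rw [hw' (2 * k), wfun_top v a b hsum]
    · intro j hj
      have hmem : w (j + 1) - w j ∈ E := by
        rw [hw', hw']
        exact hedge a b ha hb j hj
      refine ⟨hmem, fun heq => h0 ?_⟩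
      rwa [← heq, sub_self] at hmem
    · intro i hi j hj hne
      rcases lt_or_gt_of_ne hne with h | h
      · rw [hw', hw']
        exact wfun_ne hk v a b hgood h hj
      · rw [hw', hw']
        exact (wfun_ne hk v a b hgood h hi).symm
  · -- cardinality bound via injection
    set T : Set (ℕ → (Fin d → F)) := {c : ℕ → (Fin d → F) |
        c 0 = v ∧ c (2 * k) = v ∧ (∀ j, 2 * k ≤ j → c j = v) ∧
        (∀ j < 2 * k, c (j + 1) - c j ∈ E) ∧
        (∀ i < 2 * k, ∀ j < 2 * k, i ≠ j → c i ≠ c j)} with hT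
    have hfin : T.Finite := by
      have hinj : Set.InjOn (fun c : ℕ → (Fin d → F) => fun i : Fin (2 * k) => c (i : ℕ)) T := by
        intro c hc c' hc' h
        funext j
        by_cases hj : j < 2 * k
        · exact congrFun h ⟨j, hj⟩
        · rw [hc.2.2.1 j (by omega), hc'.2.2.1 j (by omega)]
      exact Set.Finite.of_finite_image (Set.toFinite _) hinj
    set Φ : (Fin k → (Fin d → F)) × (Fin k → (Fin d → F)) → (ℕ → (Fin d → F)) :=
      fun p j => if 2 * k ≤ j then v else wfun v p.1 p.2 j with hΦ
    have hΦlt : ∀ p j, j < 2 * k → Φ p j = wfun v p.1 p.2 j := by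
      intro p j hj
      simp only [hΦ, if_neg (by omega : ¬ 2 * k ≤ j)]
    have hΦeq : ∀ p : (Fin k → (Fin d → F)) × (Fin k → (Fin d → F)),
        (∑ i, p.1 i = ∑ i, p.2 i) → ∀ j ≤ 2 * k, Φ p j = wfun v p.1 p.2 j := by
      intro p hps j hj
      rcases lt_or_eq_of_le hj with h | h
      · exact hΦlt p j h
      · subst h
        simp only [hΦ, if_pos le_rfl, wfun_top v p.1 p.2 hps]
    refine Set.ncard_le_ncard_of_injOn Φ ?_ ?_ hfin
    · -- maps to
      rintro p ⟨hpa, hpb, hps, hpg⟩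
      refine ⟨?_, ?_, ?_, ?_, ?_⟩
      · rw [hΦlt p 0 (by omega), wfun_zero]
      · simp only [hΦ, if_pos le_rfl]
      · intro j hj
        simp only [hΦ, if_pos hj]
      · intro j hj
        rw [hΦeq p hps (j + 1) (by omega), hΦeq p hps j (by omega)]
        exact hedge p.1 p.2 hpa hpb j hj
      · intro i hi j hj hne
        rw [hΦlt p i hi, hΦlt p j hj]
        rcases lt_or_gt_of_ne hne with h | h
        · exact wfun_ne hk v p.1 p.2 hpg h hj
        · exact (wfun_ne hk v p.1 p.2 hpg h hi).symm
    · -- injective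
      rintro p ⟨hpa, hpb, hps, hpg⟩ p' ⟨hpa', hpb', hps', hpg'⟩ heq
      have hfst : p.1 = p'.1 := by
        funext i
        have hi := i.isLt
        have e1 : p.1 i = Φ p ((i : ℕ) + 1) - Φ p (i : ℕ) := by
          rw [hΦlt p _ (by omega), hΦlt p _ (by omega), wfun_diff_a']
        have e2 : p'.1 i = Φ p' ((i : ℕ) + 1) - Φ p' (i : ℕ) := by
          rw [hΦlt p' _ (by omega), hΦlt p' _ (by omega), wfun_diff_a']
        rw [e1, e2, heq]
      have hsnd : p.2 = p'.2 := by
        funext i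
        have hi := i.isLt
        have e1 : p.2 i = Φ p (k + (i : ℕ)) - Φ p (k + (i : ℕ) + 1) := by
          rw [hΦeq p hps _ (by omega), hΦeq p hps _ (by omega), wfun_diff_b']
        have e2 : p'.2 i = Φ p' (k + (i : ℕ)) - Φ p' (k + (i : ℕ) + 1) := by
          rw [hΦeq p' hps' _ (by omega), hΦeq p' hps' _ (by omega), wfun_diff_b']
        rw [e1, e2, heq]
      exact Prod.ext hfst hsnd
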